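/- Let E be an edge relation on a type V, let r, j ∈ V with j ≠ r, suppose r is a source of E (no w satisfies E w r), and let E' be the relation E augmented with the single edge (r, j), i.e. E' u v ↔ (E u v ∨ (u = r ∧ v = j)). Then for every u ≠ r and every v, ReflTransGen E' u v holds if and only if ReflTransGen E u v holds. (Connecting a disconnected node j to the root via the edge (r, j) does not allow any node other than the root to derive secrets of new descendants.) -/

import Mathlib

/-- Connecting a node `j` to a source root `r` via the single new edge
`(r, j)` does not change reachability from any vertex other than `r`:
no node other than the root can derive secrets of new descendants. -/
theorem addEdge_from_root_reachability {V : Type*} (E : V → V → Prop)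
    (r j : V) (hjr : j ≠ r) (hr : ∀ w, ¬ E w r) :
    ∀ u : V, u ≠ r → ∀ v : V,
      (Relation.ReflTransGen (fun a b => E a b ∨ (a = r ∧ b = j)) u v ↔
        Relation.ReflTransGen E u v) := by
  intro u hu v
  constructor
  · intro h
    have key : Relation.ReflTransGen E u v ∧ v ≠ r := by
      induction h with
      | refl => exact ⟨Relation.ReflTransGen.refl, hu⟩
      | tail _ hbc ih =>
        rcases hbc with h' | ⟨hb, _⟩
        · exact ⟨ih.1.tail h', fun hc => hr _ (hc ▸ h')⟩
        · exact absurd hb ih.2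
    exact key.1
  · intro h
    exact Relation.ReflTransGen.mono (fun a b hab => Or.inl hab) u v h
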